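/- Let D = {0,...,n}, k ≥ 1, and for 0 ≤ i ≤ n let W_i be the concatenation w_i w_{i+1} ⋯ w_{(n+1)^k-1} w_0 ⋯ w_{i-1} of all length-k words over D written in lexicographic order starting from the i-th word (cyclically). Then every infinite sequence a ∈ {W_0, ..., W_n}^ℕ (i.e., every infinite concatenation of blocks chosen from {W_0,...,W_n}) is k-simply normal: for every word b of length k over D, the frequency of occurrences of b as a factor of a equals (n+1)^{-k}. -/

import Mathlib

open Finset

lemma repval_lt (N : ℕ) (hN : 0 < N) (p : ℕ) (e : ℕ → ℕ) (he : ∀ s < p, e s < N) :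
    ∑ s ∈ Finset.range p, e s * N ^ (p - 1 - s) < N ^ p := by
  induction p generalizing e with
  | zero => simp
  | succ p ih =>
    rw [Finset.sum_range_succ']
    have h1 : ∑ s ∈ Finset.range p, e (s + 1) * N ^ (p + 1 - 1 - (s + 1))
        = ∑ s ∈ Finset.range p, e (s + 1) * N ^ (p - 1 - s) := by
      apply Finset.sum_congr rfl
      intro s hs
      congr 2
      omega
    rw [h1]
    have h2 := ih (fun s => e (s + 1)) (fun s hs => he (s + 1) (by omega))
    have h3 : e 0 + 1 ≤ N := he 0 (by omega)
    have h4 : p + 1 - 1 - 0 = p := by omega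
    rw [h4, pow_succ]
    calc (∑ s ∈ Finset.range p, e (s + 1) * N ^ (p - 1 - s)) + e 0 * N ^ p
        < N ^ p + e 0 * N ^ p := by omega
      _ = (e 0 + 1) * N ^ p := by ring
      _ ≤ N * N ^ p := Nat.mul_le_mul_right _ h3
      _ = N ^ p * N := by ring

lemma digit_iff (N : ℕ) (hN : 0 < N) (p : ℕ) (e : ℕ → ℕ) (he : ∀ s < p, e s < N) (x : ℕ) :
    (∀ s < p, x / N ^ (p - 1 - s) % N = e s) ↔
      x % N ^ p = ∑ s ∈ Finset.range p, e s * N ^ (p - 1 - s) := by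
  induction p generalizing e x with
  | zero => simp [Nat.mod_one]
  | succ p ih =>
    have hsum : ∑ s ∈ Finset.range (p+1), e s * N ^ (p + 1 - 1 - s)
        = (∑ s ∈ Finset.range p, e (s+1) * N ^ (p - 1 - s)) + e 0 * N ^ p := by
      rw [Finset.sum_range_succ']
      congr 1
      · apply Finset.sum_congr rfl; intro s hs; congr 2; omega
    have hmod : x % N ^ (p + 1) = x % N ^ p + N ^ p * (x / N ^ p % N) := by
      rw [pow_succ, Nat.mod_mul]
    have hlhs : (∀ s < p + 1, x / N ^ (p + 1 - 1 - s) % N = e s) ↔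
        (x / N ^ p % N = e 0 ∧ ∀ s < p, x / N ^ (p - 1 - s) % N = e (s + 1)) := by
      constructor
      · intro h
        constructor
        · have := h 0 (by omega)
          have hexp : p + 1 - 1 - 0 = p := by omega
          rwa [hexp] at this
        · intro s hs
          have := h (s + 1) (by omega)
          have hexp : p + 1 - 1 - (s + 1) = p - 1 - s := by omega
          rwa [hexp] at this
      · rintro ⟨h0, h⟩ s hs
        rcases Nat.eq_zero_or_pos s with rfl | hspos
        · have hexp : p + 1 - 1 - 0 = p := by omega
          rwa [hexp]
        · obtain ⟨s', rfl⟩ : ∃ s', s = s' + 1 := ⟨s - 1, by omega⟩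
          have hexp : p + 1 - 1 - (s' + 1) = p - 1 - s' := by omega
          rw [hexp]; exact h s' (by omega)
    have ihx := ih (fun s => e (s+1)) (fun s hs => he (s+1) (by omega)) x
    rw [hlhs, hsum, hmod, ihx]
    have hx : x % N ^ p < N ^ p := Nat.mod_lt _ (Nat.pow_pos hN)
    have hS : (∑ s ∈ Finset.range p, e (s+1) * N ^ (p - 1 - s)) < N ^ p :=
      repval_lt N hN p _ (fun s hs => he (s+1) (by omega))
    constructor
    · rintro ⟨h0, h1⟩; rw [h0, h1]; ring
    · intro h
      have hd : (x % N ^ p + N ^ p * (x / N ^ p % N)) % N ^ p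
          = ((∑ s ∈ Finset.range p, e (s+1) * N ^ (p - 1 - s)) + e 0 * N ^ p) % N ^ p := by
        rw [h]
      rw [Nat.add_mul_mod_self_left, Nat.add_mul_mod_self_right,
        Nat.mod_eq_of_lt hx, Nat.mod_eq_of_lt hS] at hd
      refine ⟨?_, hd⟩
      rw [hd] at h
      have := Nat.add_left_cancel h
      rw [mul_comm (e 0)] at this
      exact Nat.eq_of_mul_eq_mul_left (Nat.pow_pos hN) this

private lemma key_mod (M c x : ℕ) (hM : 0 < M) (hx : x < M) :
    (x + c + (M - c % M)) % M = x := by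
  have h1 : c % M < M := Nat.mod_lt _ hM
  have h2 : M * (c / M) + c % M = c := Nat.div_add_mod c M
  have h3 : x + c + (M - c % M) = x + M * (c / M + 1) := by
    have : M * (c / M + 1) = M * (c / M) + M := by ring
    omega
  rw [h3, Nat.add_mul_mod_self_left]
  exact Nat.mod_eq_of_lt hx

lemma card_filter_mod_shift (M c : ℕ) (hM : 0 < M) (p : ℕ → Prop) [DecidablePred p] :
    ((Finset.range M).filter (fun x => p ((x + c) % M))).card
      = ((Finset.range M).filter p).card := by
  apply Finset.card_nbij' (i := fun x => (x + c) % M)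
    (j := fun y => (y + (M - c % M)) % M)
  · intro x hx
    simp only [Finset.mem_coe, Finset.mem_filter, Finset.mem_range] at *
    exact ⟨Nat.mod_lt _ hM, hx.2⟩
  · intro y hy
    simp only [Finset.mem_coe, Finset.mem_filter, Finset.mem_range] at *
    refine ⟨Nat.mod_lt _ hM, ?_⟩
    have : ((y + (M - c % M)) % M + c) % M = y := by
      rw [Nat.mod_add_mod]
      have h1 : c % M < M := Nat.mod_lt _ hM
      have h2 : M * (c / M) + c % M = c := Nat.div_add_mod c M
      have h3 : y + (M - c % M) + c = y + M * (c / M + 1) := by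
        have : M * (c / M + 1) = M * (c / M) + M := by ring
        omega
      rw [h3, Nat.add_mul_mod_self_left]
      exact Nat.mod_eq_of_lt hy.1
    rw [this]
    exact hy.2
  · intro x hx
    simp only [Finset.mem_coe, Finset.mem_filter, Finset.mem_range] at hx
    show ((x + c) % M + (M - c % M)) % M = x
    rw [Nat.mod_add_mod]
    exact key_mod M c x hM hx.1
  · intro y hy
    simp only [Finset.mem_coe, Finset.mem_filter, Finset.mem_range] at hy
    show ((y + (M - c % M)) % M + c) % M = y
    rw [Nat.mod_add_mod]
    have h1 : c % M < M := Nat.mod_lt _ hM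
    have h2 : M * (c / M) + c % M = c := Nat.div_add_mod c M
    have h3 : y + (M - c % M) + c = y + M * (c / M + 1) := by
      have : M * (c / M + 1) = M * (c / M) + M := by ring
      omega
    rw [h3, Nat.add_mul_mod_self_left]
    exact Nat.mod_eq_of_lt hy.1

lemma card_filter_pair (P Q A B : ℕ) (hP : 0 < P) (hA : A < P) (hB : B < Q) :
    ((Finset.range (P * Q)).filter (fun y => y % P = A ∧ y / P = B)).card = 1 := by
  rw [Finset.card_eq_one]
  refine ⟨P * B + A, ?_⟩
  ext y
  simp only [Finset.mem_filter, Finset.mem_range, Finset.mem_singleton]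
  constructor
  · rintro ⟨hy, h1, h2⟩
    have := Nat.div_add_mod y P
    rw [h1, h2] at this
    omega
  · rintro rfl
    refine ⟨?_, ?_, ?_⟩
    · calc P * B + A < P * B + P := by omega
        _ = P * (B + 1) := by ring
        _ ≤ P * Q := Nat.mul_le_mul_left _ (by omega)
    · rw [Nat.mul_add_mod]
      exact Nat.mod_eq_of_lt hA
    · rw [Nat.mul_add_div hP, Nat.div_eq_of_lt hA]
      omega

lemma card_filter_cyclic (P Q : ℕ) (A B : ℕ) (hP : 0 < P) (hQ : 0 < Q) (hA : A < P) (hB : B < Q) :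
    ((Finset.range (P * Q)).filter
      (fun x => x % P = A ∧ (x + 1) % (P * Q) / P = B)).card = 1 := by
  have hK : 0 < P * Q := Nat.mul_pos hP hQ
  have hmm : ∀ x : ℕ, ((x + 1) % (P * Q)) % P = (x + 1) % P :=
    fun x => Nat.mod_mod_of_dvd _ ⟨Q, rfl⟩
  have hu : ∀ u A' : ℕ, u < P → A' < P → (u = A' ↔ (u + 1) % P = (A' + 1) % P) := by
    intro u A' hup hA'p
    constructor
    · rintro rfl; rfl
    · intro h
      have h2 := congrArg (fun z => (z + (P - 1)) % P) h
      simp only [Nat.mod_add_mod] at h2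
      have e1 : u + 1 + (P - 1) = u + P := by omega
      have e2 : A' + 1 + (P - 1) = A' + P := by omega
      rw [e1, e2, Nat.add_mod_right, Nat.add_mod_right,
        Nat.mod_eq_of_lt hup, Nat.mod_eq_of_lt hA'p] at h2
      exact h2
  have hcongr : ∀ x ∈ Finset.range (P * Q),
      ((fun x => x % P = A ∧ (x + 1) % (P * Q) / P = B) x
        ↔ (fun y => y % P = (A + 1) % P ∧ y / P = B) ((x + 1) % (P * Q))) := by
    intro x hx
    simp only
    rw [hmm x]
    have h1 : x % P < P := Nat.mod_lt _ hP
    have := hu (x % P) A h1 hA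
    rw [Nat.mod_add_mod] at this
    rw [this]
  have hfil : ((Finset.range (P * Q)).filter
        (fun x => x % P = A ∧ (x + 1) % (P * Q) / P = B))
      = ((Finset.range (P * Q)).filter
        (fun x => ((x + 1) % (P * Q)) % P = (A + 1) % P ∧ ((x + 1) % (P * Q)) / P = B)) :=
    Finset.filter_congr hcongr
  rw [hfil]
  rw [card_filter_mod_shift (P * Q) 1 hK (fun y => y % P = (A + 1) % P ∧ y / P = B)]
  exact card_filter_pair P Q ((A + 1) % P) B hP (Nat.mod_lt _ hP) hB

lemma card_filter_range_add (p : ℕ → Prop) [DecidablePred p] (x b : ℕ) :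
    ((Finset.range (x + b)).filter p).card
      = ((Finset.range x).filter p).card
        + ((Finset.range b).filter (fun s => p (x + s))).card := by
  induction b with
  | zero => simp
  | succ b ih =>
    rw [show x + (b + 1) = (x + b) + 1 from rfl, Finset.range_add_one, Finset.range_add_one,
      Finset.filter_insert, Finset.filter_insert]
    by_cases h : p (x + b)
    · rw [if_pos h, if_pos h, Finset.card_insert_of_notMem (by simp),
        Finset.card_insert_of_notMem (by simp)]
      omega
    · rw [if_neg h, if_neg h, ih]

lemma card_filter_range_mul (p : ℕ → Prop) [DecidablePred p] (a b : ℕ) :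
    ((Finset.range (a * b)).filter p).card
      = ∑ m ∈ Finset.range a, ((Finset.range b).filter (fun s => p (m * b + s))).card := by
  induction a with
  | zero => simp
  | succ a ih =>
    rw [Finset.sum_range_succ, ← ih, show (a + 1) * b = a * b + b by ring,
      card_filter_range_add]

private theorem block_count (n k : ℕ) (hk : 1 ≤ k)
    (f : ℕ → ℕ) (hf : ∀ m, f m ≤ n) (a : ℕ → ℕ)
    (ha : ∀ j, a j = ((f (j / (k * (n + 1) ^ k)) + (j % (k * (n + 1) ^ k)) / k) % (n + 1) ^ k)
        / (n + 1) ^ (k - 1 - (j % (k * (n + 1) ^ k)) % k) % (n + 1))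
    (w : ℕ → ℕ) (hw : ∀ t < k, w t ≤ n) (M : ℕ) :
    ((Finset.range (M * (k * (n + 1) ^ k))).filter
      (fun j => ∀ t < k, a (j + t) = w t)).card = M * k := by
  set N := n + 1 with hNdef
  set K := N ^ k with hKdef
  set L := k * K with hLdef
  have hN : 0 < N := Nat.succ_pos n
  have hK : 0 < K := Nat.pow_pos hN
  have hL : 0 < L := Nat.mul_pos hk hK
  have hNK : N ≤ K := by
    calc N = N ^ 1 := (pow_one N).symm
    _ ≤ N ^ k := Nat.pow_le_pow_right hN hk
  clear_value N K L
  -- per block, per residue count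
  have hblock : ∀ m r, r < k →
      ((Finset.range K).filter
        (fun t => ∀ s < k, a (m * L + (t * k + r) + s) = w s)).card = 1 := by
    intro m r hr
    set P := N ^ (k - r) with hPdef
    set Q := N ^ r with hQdef
    have hP : 0 < P := Nat.pow_pos hN
    have hQ : 0 < Q := Nat.pow_pos hN
    have hPQ : P * Q = K := by
      rw [hPdef, hQdef, hKdef, ← pow_add]
      congr 1
      omega
    have hNP : N ≤ P := by
      calc N = N ^ 1 := (pow_one N).symm
      _ ≤ N ^ (k - r) := Nat.pow_le_pow_right hN (by omega)
    set A := ∑ s ∈ Finset.range (k - r), w s * N ^ (k - r - 1 - s) with hAdef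
    set B := ∑ s ∈ Finset.range r, w (k - r + s) * N ^ (r - 1 - s) with hBdef
    have hA : A < P := by
      rw [hAdef, hPdef]
      exact repval_lt N hN (k - r) w (fun s hs => by have := hw s (by omega); omega)
    have hB : B < Q := by
      rw [hBdef, hQdef]
      exact repval_lt N hN r (fun s => w (k - r + s))
        (fun s hs => by show w (k - r + s) < N; have := hw (k - r + s) (by omega); omega)
    clear_value P Q A B
    -- the pointwise equivalence
    have hiff : ∀ t ∈ Finset.range K,
        ((∀ s < k, a (m * L + (t * k + r) + s) = w s) ↔
          ((fun x => x % P = A ∧ (x + 1) % K / P = B) ((t + f m) % K))) := by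
      intro t htm
      have ht : t < K := Finset.mem_range.1 htm
      set x := (t + f m) % K with hxdef
      have hxK : x < K := Nat.mod_lt _ hK
      -- value of a at positions with r + s < k
      have hval1 : ∀ s, r + s < k →
          a (m * L + (t * k + r) + s) = x / N ^ (k - 1 - (r + s)) % N := by
        intro s hs
        have hj : m * L + (t * k + r) + s = L * m + (t * k + (r + s)) := by ring
        have hc : t * k + (r + s) < L := by
          have h1 : (t + 1) * k ≤ K * k := Nat.mul_le_mul_right _ (by omega)
          have h2 : (t + 1) * k = t * k + k := by ring
          have h3 : L = K * k := by rw [hLdef]; ring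
          omega
        rw [hj, ha]
        have hdiv : (L * m + (t * k + (r + s))) / L = m := by
          rw [Nat.mul_add_div hL, Nat.div_eq_of_lt hc]
          all_goals omega
        have hmod : (L * m + (t * k + (r + s))) % L = t * k + (r + s) := by
          rw [Nat.mul_add_mod]
          exact Nat.mod_eq_of_lt hc
        rw [hdiv, hmod]
        have hd2 : (t * k + (r + s)) / k = t := by
          rw [mul_comm t k, Nat.mul_add_div hk, Nat.div_eq_of_lt hs]
          all_goals omega
        have hm2 : (t * k + (r + s)) % k = r + s := by
          rw [mul_comm t k, Nat.mul_add_mod]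
          exact Nat.mod_eq_of_lt hs
        rw [hd2, hm2, hxdef, add_comm t (f m)]
      -- value of a at positions with r + s ≥ k
      have hval2 : ∀ s, k ≤ r + s → s < k →
          a (m * L + (t * k + r) + s) = (x + 1) % K / N ^ (k - 1 - (r + s - k)) % N := by
        intro s h1 h2
        have hr1 : 1 ≤ r := by omega
        have he1 : r + s - k < r := by omega
        have he2 : 1 ≤ k - 1 - (r + s - k) := by omega
        have hNe : N ≤ N ^ (k - 1 - (r + s - k)) := by
          calc N = N ^ 1 := (pow_one N).symm
          _ ≤ _ := Nat.pow_le_pow_right hN he2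
        have hj : m * L + (t * k + r) + s = L * m + ((t + 1) * k + (r + s - k)) := by
          have h6 : (t + 1) * k = t * k + k := by ring
          have h8 : m * L = L * m := Nat.mul_comm _ _
          omega
        rcases Nat.lt_or_ge (t + 1) K with htK | htK
        · -- still inside block m
          have hc : (t + 1) * k + (r + s - k) < L := by
            have h3 : (t + 2) * k ≤ K * k := Nat.mul_le_mul_right _ (by omega)
            have h4 : (t + 2) * k = (t + 1) * k + k := by ring
            have h5 : L = K * k := by rw [hLdef]; ring
            omega
          rw [hj, ha]
          have hdiv : (L * m + ((t + 1) * k + (r + s - k))) / L = m := by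
            rw [Nat.mul_add_div hL, Nat.div_eq_of_lt hc]
            all_goals omega
          have hmod : (L * m + ((t + 1) * k + (r + s - k))) % L = (t + 1) * k + (r + s - k) := by
            rw [Nat.mul_add_mod]
            exact Nat.mod_eq_of_lt hc
          rw [hdiv, hmod]
          have hd2 : ((t + 1) * k + (r + s - k)) / k = t + 1 := by
            rw [mul_comm (t + 1) k, Nat.mul_add_div hk, Nat.div_eq_of_lt (by omega)]
            all_goals omega
          have hm2 : ((t + 1) * k + (r + s - k)) % k = r + s - k := by
            rw [mul_comm (t + 1) k, Nat.mul_add_mod]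
            exact Nat.mod_eq_of_lt (by omega)
          rw [hd2, hm2]
          congr 2
          rw [hxdef, Nat.mod_add_mod]
          congr 1
          omega
        · -- we spill into block m+1
          have ht1 : t + 1 = K := by omega
          have hj2 : m * L + (t * k + r) + s = L * (m + 1) + (r + s - k) := by
            have h5 : t * k + k = L := by
              rw [hLdef, ← ht1]; ring
            have h8 : L * (m + 1) = m * L + L := by ring
            omega
          rw [hj2, ha]
          have hek : r + s - k < L := by
            have : k ≤ L := by rw [hLdef]; exact Nat.le_mul_of_pos_right k hK
            omega
          have hdiv : (L * (m + 1) + (r + s - k)) / L = m + 1 := by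
            rw [Nat.mul_add_div hL, Nat.div_eq_of_lt hek]
            all_goals omega
          have hmod : (L * (m + 1) + (r + s - k)) % L = r + s - k := by
            rw [Nat.mul_add_mod]
            exact Nat.mod_eq_of_lt hek
          rw [hdiv, hmod]
          have hd2 : (r + s - k) / k = 0 := Nat.div_eq_of_lt (by omega)
          have hm2 : (r + s - k) % k = r + s - k := Nat.mod_eq_of_lt (by omega)
          rw [hd2, hm2, add_zero]
          have hfm1 : f (m + 1) % K = f (m + 1) :=
            Nat.mod_eq_of_lt (by have := hf (m + 1); omega)
          rw [hfm1]
          have hz1 : f (m + 1) / N ^ (k - 1 - (r + s - k)) = 0 :=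
            Nat.div_eq_of_lt (by have := hf (m + 1); omega)
          have hx1 : (x + 1) % K = f m := by
            rw [hxdef, Nat.mod_add_mod]
            have : t + f m + 1 = f m + K := by omega
            rw [this, Nat.add_mod_right]
            exact Nat.mod_eq_of_lt (by have := hf m; omega)
          have hz2 : (x + 1) % K / N ^ (k - 1 - (r + s - k)) = 0 := by
            rw [hx1]
            exact Nat.div_eq_of_lt (by have := hf m; omega)
          rw [hz1, hz2]
      -- now the digit packing
      have hsplit : (∀ s < k, a (m * L + (t * k + r) + s) = w s) ↔
          ((∀ s < k - r, a (m * L + (t * k + r) + s) = w s) ∧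
           (∀ s' < r, a (m * L + (t * k + r) + (k - r + s')) = w (k - r + s'))) := by
        constructor
        · intro h
          exact ⟨fun s hs => h s (by omega), fun s' hs' => h (k - r + s') (by omega)⟩
        · rintro ⟨h1, h2⟩ s hs
          rcases Nat.lt_or_ge s (k - r) with h | h
          · exact h1 s h
          · have : s = k - r + (s - (k - r)) := by omega
            rw [this]
            exact h2 (s - (k - r)) (by omega)
      have hwlt : ∀ s < k - r, w s < N := fun s hs => by have := hw s (by omega); omega
      have hleft : (∀ s < k - r, a (m * L + (t * k + r) + s) = w s) ↔ x % P = A := by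
        have hv1' : ∀ s < k - r,
            a (m * L + (t * k + r) + s) = x / N ^ (k - r - 1 - s) % N := by
          intro s hs
          rw [hval1 s (by omega)]
          have : k - 1 - (r + s) = k - r - 1 - s := by omega
          rw [this]
        calc (∀ s < k - r, a (m * L + (t * k + r) + s) = w s)
            ↔ (∀ s < k - r, x / N ^ (k - r - 1 - s) % N = w s) :=
              forall₂_congr (fun s hs => by rw [hv1' s hs])
          _ ↔ x % P = A := by rw [hPdef, hAdef]; exact digit_iff N hN (k - r) w hwlt x
      have hy : (x + 1) % K / P < Q := by
        have h1 : (x + 1) % K < K := Nat.mod_lt _ hK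
        rw [Nat.div_lt_iff_lt_mul hP]
        calc (x + 1) % K < K := h1
        _ = Q * P := by rw [← hPQ]; ring
      have hright : (∀ s' < r, a (m * L + (t * k + r) + (k - r + s')) = w (k - r + s')) ↔
          (x + 1) % K / P = B := by
        have hv2' : ∀ s' < r,
            a (m * L + (t * k + r) + (k - r + s'))
              = ((x + 1) % K / P) / N ^ (r - 1 - s') % N := by
          intro s' hs'
          rw [hval2 (k - r + s') (by omega) (by omega)]
          have he : r + (k - r + s') - k = s' := by omega
          rw [he]
          have hexp : k - 1 - s' = (k - r) + (r - 1 - s') := by omega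
          rw [hexp, pow_add, ← Nat.div_div_eq_div_mul, hPdef]
        calc (∀ s' < r, a (m * L + (t * k + r) + (k - r + s')) = w (k - r + s'))
            ↔ (∀ s' < r, ((x + 1) % K / P) / N ^ (r - 1 - s') % N = w (k - r + s')) :=
              forall₂_congr (fun s' hs' => by rw [hv2' s' hs'])
          _ ↔ ((x + 1) % K / P) % Q = B := by
              rw [hQdef, hBdef]
              exact digit_iff N hN r (fun s' => w (k - r + s')) (fun s' hs' => by
                show w (k - r + s') < N
                have := hw (k - r + s') (by omega); omega) _
          _ ↔ (x + 1) % K / P = B := by rw [Nat.mod_eq_of_lt hy]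
      rw [hsplit, hleft, hright]
    rw [Finset.filter_congr hiff,
      card_filter_mod_shift K (f m) hK (fun x => x % P = A ∧ (x + 1) % K / P = B), ← hPQ]
    exact card_filter_cyclic P Q A B hP hQ hA hB
  -- sum over blocks
  rw [card_filter_range_mul]
  have hsum1 : ∀ m ∈ Finset.range M,
      ((Finset.range L).filter (fun s => ∀ t < k, a (m * L + s + t) = w t)).card = k := by
    intro m _
    have hLK : L = K * k := by rw [hLdef]; ring
    rw [show Finset.range L = Finset.range (K * k) from by rw [hLK], card_filter_range_mul]
    simp only [Finset.card_filter]
    rw [Finset.sum_comm]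
    have hone : ∀ r ∈ Finset.range k,
        (∑ t ∈ Finset.range K,
          if (∀ s < k, a (m * L + (t * k + r) + s) = w s) then 1 else 0) = 1 := by
      intro r hr
      have := hblock m r (Finset.mem_range.1 hr)
      rwa [Finset.card_filter] at this
    rw [Finset.sum_congr rfl hone, Finset.sum_const, Finset.card_range, smul_eq_mul, mul_one]
  rw [Finset.sum_congr rfl hsum1, Finset.sum_const, Finset.card_range, smul_eq_mul]

/-- every infinite concatenation of blocks from `{W₀, …, W_n}` is `k`-simply
normal.  Here `W i` is the concatenation of all `(n+1)^k` words of length `k` over `{0,…,n}`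
in lexicographic order starting cyclically from the `i`-th word: its `j`-th letter
(`j < k·(n+1)^k`) is letter `j % k` of word number `(i + j/k) mod (n+1)^k`.  The sequence `a`
is a concatenation of blocks `W (f 0) W (f 1) ⋯` with each `f m ≤ n`.  Conclusion: for every
word `w` of length `k`, the frequency of occurrences of `w` in `a` equals `(n+1)^{-k}`. -/
theorem champernowne_blocks_k_simply_normal (n k : ℕ) (hn : 1 ≤ n) (hk : 1 ≤ k)
    (W : ℕ → ℕ → ℕ)
    (hW : ∀ i j, W i j = (((i + j / k) % (n + 1) ^ k) / (n + 1) ^ (k - 1 - j % k)) % (n + 1))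
    (f : ℕ → ℕ) (hf : ∀ m, f m ≤ n)
    (a : ℕ → ℕ)
    (ha : ∀ j, a j = W (f (j / (k * (n + 1) ^ k))) (j % (k * (n + 1) ^ k)))
    (w : ℕ → ℕ) (hw : ∀ t < k, w t ≤ n) :
    Filter.Tendsto
      (fun m => (((Finset.range m).filter (fun j => ∀ t < k, a (j + t) = w t)).card : ℝ) / m)
      Filter.atTop (nhds (1 / ((n : ℝ) + 1) ^ k)) := by
  have ha' : ∀ j, a j = ((f (j / (k * (n + 1) ^ k)) + (j % (k * (n + 1) ^ k)) / k) % (n + 1) ^ k)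
      / (n + 1) ^ (k - 1 - (j % (k * (n + 1) ^ k)) % k) % (n + 1) := by
    intro j
    rw [ha j, hW]
  have hcount := block_count n k hk f hf a ha' w hw
  set L := k * (n + 1) ^ k with hLdef
  have hL : 0 < L := Nat.mul_pos hk (Nat.pow_pos (Nat.succ_pos n))
  set cnt := fun m => ((Finset.range m).filter (fun j => ∀ t < k, a (j + t) = w t)).card
    with hcnt
  have hmono : ∀ {m1 m2 : ℕ}, m1 ≤ m2 → cnt m1 ≤ cnt m2 := fun h =>
    Finset.card_le_card (Finset.filter_subset_filter _ (Finset.range_subset_range.2 h))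
  set np := ((n : ℝ) + 1) ^ k with hnp
  have hnp0 : (0 : ℝ) < np := by positivity
  have hLk : (L : ℝ) = k * np := by rw [hLdef, hnp]; push_cast; ring
  have hk0 : (0 : ℝ) < k := by exact_mod_cast hk
  have key : ∀ m : ℕ, 1 ≤ m →
      (1 / np - k / m ≤ (cnt m : ℝ) / m ∧ (cnt m : ℝ) / m ≤ 1 / np + k / m) := by
    intro m hm
    have hm0 : (0 : ℝ) < m := by exact_mod_cast hm
    set q := m / L with hq
    have h1 : q * L ≤ m := Nat.div_mul_le_self m L
    have h2 : m < (q + 1) * L := by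
      have e1 : L * q + m % L = m := Nat.div_add_mod m L
      have e2 : m % L < L := Nat.mod_lt m hL
      have e3 : (q + 1) * L = L * q + L := by ring
      omega
    have h3 : q * k ≤ cnt m := by
      have := hcount q
      calc q * k = cnt (q * L) := (this).symm
        _ ≤ cnt m := hmono h1
    have h4 : cnt m ≤ (q + 1) * k := by
      have := hcount (q + 1)
      calc cnt m ≤ cnt ((q + 1) * L) := hmono (le_of_lt h2)
        _ = (q + 1) * k := this
    have h1' : (q : ℝ) * L ≤ m := by exact_mod_cast h1
    have h2' : (m : ℝ) < (q + 1) * L := by exact_mod_cast h2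
    have h3' : (q : ℝ) * k ≤ cnt m := by exact_mod_cast h3
    have h4' : (cnt m : ℝ) ≤ (q + 1) * k := by exact_mod_cast h4
    rw [hLk] at h1' h2'
    have h5 : (m : ℝ) - np * k ≤ (cnt m : ℝ) * np := by
      nlinarith [mul_le_mul_of_nonneg_right h3' hnp0.le]
    have h6 : (cnt m : ℝ) * np ≤ (m : ℝ) + np * k := by
      nlinarith [mul_le_mul_of_nonneg_right h4' hnp0.le]
    constructor
    · rw [div_sub_div _ _ (ne_of_gt hnp0) (ne_of_gt hm0), div_le_div_iff₀ (by positivity) hm0]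
      nlinarith [mul_le_mul_of_nonneg_right h5 hm0.le]
    · rw [div_add_div _ _ (ne_of_gt hnp0) (ne_of_gt hm0), div_le_div_iff₀ hm0 (by positivity)]
      nlinarith [mul_le_mul_of_nonneg_right h6 hm0.le]
  have hlow : Filter.Tendsto (fun m : ℕ => 1 / np - (k : ℝ) / m) Filter.atTop
      (nhds (1 / np - 0)) :=
    Filter.Tendsto.sub tendsto_const_nhds (tendsto_const_div_atTop_nhds_zero_nat (k : ℝ))
  rw [sub_zero] at hlow
  have hhigh : Filter.Tendsto (fun m : ℕ => 1 / np + (k : ℝ) / m) Filter.atTop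
      (nhds (1 / np + 0)) :=
    Filter.Tendsto.add tendsto_const_nhds (tendsto_const_div_atTop_nhds_zero_nat (k : ℝ))
  rw [add_zero] at hhigh
  refine tendsto_of_tendsto_of_tendsto_of_le_of_le' hlow hhigh ?_ ?_
  · filter_upwards [Filter.eventually_ge_atTop 1] with m hm
    exact (key m hm).1
  · filter_upwards [Filter.eventually_ge_atTop 1] with m hm
    exact (key m hm).2
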